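/- Let C ≥ 1 and α > 1 be real numbers, and let (V_k)_{k≥0} be a sequence of nonnegative real numbers such that V_k ≤ C^k · V_{k−1}^α for all k ≥ 1. If V₀ < C^{−α²/(α−1)²}, then V_k converges to 0 as k → ∞. -/
import Mathlib


open Filter

/-- If `C ≥ 1`, `α > 1`, `(V_k)` is a nonnegative sequence with `V_k ≤ C^k V_{k-1}^α` for
all `k ≥ 1`, and `V₀ < C^{-α²/(α-1)²}`, then `V_k → 0`. -/
theorem seq_tends_to_zero (C α : ℝ) (hC : 1 ≤ C) (hα : 1 < α) (V : ℕ → ℝ)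
    (hVnn : ∀ k, 0 ≤ V k)
    (hrec : ∀ k : ℕ, 1 ≤ k → V k ≤ C ^ k * V (k - 1) ^ α)
    (hV0 : V 0 < C ^ (-(α ^ 2 / (α - 1) ^ 2))) :
    Tendsto V atTop (nhds 0) := by
  have hC0 : (0:ℝ) < C := lt_of_lt_of_le one_pos hC
  have hα0 : (0:ℝ) < α := lt_trans one_pos hα
  have hb : (0:ℝ) < α - 1 := by linarith
  set β : ℝ := -(1/(α-1)) with hβ
  set γ : ℝ := -(α/(α-1)^2) with hγ
  have hβ0 : β ≤ 0 := by
    rw [hβ, neg_nonpos]; positivity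
  have hγ0 : γ ≤ 0 := by
    rw [hγ, neg_nonpos]; positivity
  set D : ℝ := C ^ (-(α ^ 2 / (α - 1) ^ 2)) with hD
  have hDpos : 0 < D := Real.rpow_pos_of_pos hC0 _
  set t : ℝ := V 0 / D with ht
  have ht0 : 0 ≤ t := div_nonneg (hVnn 0) hDpos.le
  have ht1 : t < 1 := (div_lt_one hDpos).2 hV0
  have hV0eq : V 0 = D * t := by
    rw [ht]; field_simp
  have claim : ∀ k : ℕ, V k ≤ C ^ (β * k + γ) * t ^ ((α ^ k : ℝ)) := by
    intro k
    induction k with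
    | zero =>
      simp only [Nat.cast_zero, mul_zero, zero_add, pow_zero, Real.rpow_one]
      rw [hV0eq, hD]
      have hexp : -(α ^ 2 / (α - 1) ^ 2) ≤ γ := by
        rw [hγ]
        rw [neg_le_neg_iff]
        apply div_le_div_of_nonneg_right ?_ (by positivity)
        nlinarith
      exact mul_le_mul_of_nonneg_right (Real.rpow_le_rpow_of_exponent_le hC hexp) ht0
    | succ n ih =>
      have h1 : V (n+1) ≤ C ^ (n+1) * V n ^ α := by
        have := hrec (n+1) (Nat.le_add_left 1 n)
        simpa using this
      have h2 : V n ^ α ≤ (C ^ (β * n + γ) * t ^ ((α ^ n : ℝ))) ^ α :=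
        Real.rpow_le_rpow (hVnn n) ih hα0.le
      have h3 : V (n+1) ≤ C ^ (n+1) * (C ^ (β * n + γ) * t ^ ((α ^ n : ℝ))) ^ α :=
        h1.trans (mul_le_mul_of_nonneg_left h2 (by positivity))
      have key : C ^ (n+1) * (C ^ (β * n + γ) * t ^ ((α ^ n : ℝ))) ^ α
          = C ^ (β * (n+1:ℕ) + γ) * t ^ ((α ^ (n+1) : ℝ)) := by
        rw [Real.mul_rpow (Real.rpow_nonneg hC0.le _) (Real.rpow_nonneg ht0 _),
          ← Real.rpow_natCast C (n+1),
          ← Real.rpow_mul hC0.le, ← Real.rpow_mul ht0, ← mul_assoc, ← Real.rpow_add hC0]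
        have e1 : ((n+1:ℕ):ℝ) + (β * n + γ) * α = β * ((n+1:ℕ):ℝ) + γ := by
          push_cast
          rw [hβ, hγ]
          field_simp
          ring
        have e2 : α ^ n * α = α ^ (n+1) := by ring
        rw [e1, e2]
      rw [key] at h3
      exact h3
  have hbound : ∀ k : ℕ, V k ≤ t ^ ((α ^ k : ℝ)) := by
    intro k
    refine (claim k).trans ?_
    have h1 : C ^ (β * k + γ) ≤ 1 := by
      apply Real.rpow_le_one_of_one_le_of_nonpos hC
      have : β * k ≤ 0 := mul_nonpos_of_nonpos_of_nonneg hβ0 (Nat.cast_nonneg k)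
      linarith
    calc C ^ (β * k + γ) * t ^ ((α ^ k : ℝ)) ≤ 1 * t ^ ((α ^ k : ℝ)) :=
          mul_le_mul_of_nonneg_right h1 (Real.rpow_nonneg ht0 _)
      _ = t ^ ((α ^ k : ℝ)) := one_mul _
  have htend : Tendsto (fun k : ℕ => t ^ ((α ^ k : ℝ))) atTop (nhds 0) := by
    have h1 : Tendsto (fun k : ℕ => (α ^ k : ℝ)) atTop atTop :=
      tendsto_pow_atTop_atTop_of_one_lt hα
    have h2 := tendsto_rpow_atTop_of_base_lt_one t (by linarith) ht1
    exact h2.comp h1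
  exact squeeze_zero hVnn hbound htend
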